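/- Let B be a finite left regular band and c ∈ B; set X := Bc, B_{≥X} := {b ∈ B : X ⊆ Bb} and L_X := {b ∈ B : Bb = X}. Then the following are equivalent: (i) any two elements of B_{≥X} are joined by the reflexive–transitive closure of the relation 'u, v ∈ B_{≥X} and (u ≤ v or v ≤ u)' (connectivity of the comparability graph of B_{≥X}, equivalently of the Hasse diagram or the order complex Δ(B_{≥X})); (ii) any two elements of L_X are joined by the reflexive–transitive closure of the relation 'x, y ∈ L_X and there exists b ∈ B with b·x = x and b·y = y' (connectivity of the graph Γ(X) whose vertices are L_X and whose edges join elements with a common upper bound). -/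

import Mathlib

/-- The principal left ideal of `a` in a semigroup: `Ba = {x * a : x ∈ B}`. -/
def leftIdeal {B : Type*} [Mul B] (a : B) : Set B := {x : B | ∃ y : B, y * a = x}

/-- For a finite left regular band `B` and `X = Bc`, the order complex of
`B_{≥X}` is connected if and only if the graph `Γ(X)` on the `L`-class `L_X`,
joining elements with a common upper bound, is connected. -/
theorem stmt5 {B : Type*} [Semigroup B] [Finite B]
    (idem : ∀ x : B, x * x = x) (lrb : ∀ x y : B, x * y * x = x * y) (c : B) :
    (∀ a ∈ {b : B | leftIdeal c ⊆ leftIdeal b},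
      ∀ b ∈ {b : B | leftIdeal c ⊆ leftIdeal b},
        Relation.ReflTransGen
          (fun u v : B => u ∈ {b : B | leftIdeal c ⊆ leftIdeal b} ∧
            v ∈ {b : B | leftIdeal c ⊆ leftIdeal b} ∧ (v * u = u ∨ u * v = v)) a b) ↔
    (∀ x ∈ {b : B | leftIdeal b = leftIdeal c},
      ∀ y ∈ {b : B | leftIdeal b = leftIdeal c},
        Relation.ReflTransGen
          (fun x' y' : B => x' ∈ {b : B | leftIdeal b = leftIdeal c} ∧
            y' ∈ {b : B | leftIdeal b = leftIdeal c} ∧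
            ∃ b : B, b * x' = x' ∧ b * y' = y') x y) := by
  -- basic characterization of ideal inclusion
  have hsub : ∀ a b : B, leftIdeal a ⊆ leftIdeal b ↔ a * b = a := by
    intro a b
    constructor
    · intro h
      obtain ⟨y, hy⟩ := h ⟨a, idem a⟩
      calc a * b = y * b * b := by rw [hy]
        _ = y * (b * b) := mul_assoc _ _ _
        _ = y * b := by rw [idem]
        _ = a := hy
    · rintro h x ⟨y, rfl⟩
      exact ⟨y * a, by rw [mul_assoc, h]⟩
  have hsub' : ∀ a b : B, a * b = a → leftIdeal a ⊆ leftIdeal b :=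
    fun a b h => (hsub a b).mpr h
  -- u ∈ B≥X, then u*c ∈ L_X
  have hLX : ∀ u : B, c * u = c → leftIdeal (u * c) = leftIdeal c := by
    intro u hu
    apply le_antisymm
    · exact hsub' _ _ (by rw [mul_assoc, idem])
    · exact hsub' _ _ (by rw [← mul_assoc, hu]; exact idem c)
  have hmemL : ∀ x : B, leftIdeal x = leftIdeal c → x * c = x :=
    fun x hx => (hsub x c).mp (le_of_eq hx)
  have hmemC : ∀ x : B, leftIdeal x = leftIdeal c → c * x = c :=
    fun x hx => (hsub c x).mp (le_of_eq hx.symm)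
  constructor
  · -- comparability connected → Γ connected
    intro hC x hx y hy
    have hx' : c * x = c := hmemC x hx
    have hy' : c * y = c := hmemC y hy
    have hpath := hC x (hsub' c x hx') y (hsub' c y hy')
    have hlift : Relation.ReflTransGen
        (fun x' y' : B => x' ∈ {b : B | leftIdeal b = leftIdeal c} ∧
          y' ∈ {b : B | leftIdeal b = leftIdeal c} ∧
          ∃ b : B, b * x' = x' ∧ b * y' = y') (x * c) (y * c) := by
      refine Relation.ReflTransGen.lift (fun u => u * c) (fun u v huv => ?_) x y hpath
      obtain ⟨hu, hv, hcmp⟩ := huv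
      have hcu : c * u = c := (hsub c u).mp hu
      have hcv : c * v = c := (hsub c v).mp hv
      refine ⟨hLX u hcu, hLX v hcv, ?_⟩
      rcases hcmp with h | h
      · exact ⟨v, by rw [← mul_assoc, h], by rw [← mul_assoc, idem]⟩
      · exact ⟨u, by rw [← mul_assoc, idem], by rw [← mul_assoc, h]⟩
    rwa [hmemL x hx, hmemL y hy] at hlift
  · -- Γ connected → comparability connected
    intro hG a ha b hb
    have hca : c * a = c := (hsub c a).mp ha
    have hcb : c * b = c := (hsub c b).mp hb
    have hac : leftIdeal (a * c) = leftIdeal c := hLX a hca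
    have hbc : leftIdeal (b * c) = leftIdeal c := hLX b hcb
    have hpath := hG (a * c) hac (b * c) hbc
    -- each Γ-step lifts to a 2-step comparability path
    have hkey : ∀ u v : B, (leftIdeal u = leftIdeal c ∧
        leftIdeal v = leftIdeal c ∧ ∃ d : B, d * u = u ∧ d * v = v) →
        Relation.ReflTransGen
          (fun u v : B => u ∈ {b : B | leftIdeal c ⊆ leftIdeal b} ∧
            v ∈ {b : B | leftIdeal c ⊆ leftIdeal b} ∧ (v * u = u ∨ u * v = v)) u v := by
      rintro u v ⟨hu, hv, d, hdu, hdv⟩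
      have hud : u * d = u := by
        conv_lhs => rw [← hdu]
        rw [lrb, hdu]
      have hdS : leftIdeal c ⊆ leftIdeal d :=
        le_of_eq hu.symm |>.trans (hsub' u d hud)
      refine Relation.ReflTransGen.head ⟨le_of_eq hu.symm, hdS, Or.inl hdu⟩ ?_
      exact Relation.ReflTransGen.single ⟨hdS, le_of_eq hv.symm, Or.inr hdv⟩
    -- transport the Γ-path along hkey
    have hmid : Relation.ReflTransGen
        (fun u v : B => u ∈ {b : B | leftIdeal c ⊆ leftIdeal b} ∧
          v ∈ {b : B | leftIdeal c ⊆ leftIdeal b} ∧ (v * u = u ∨ u * v = v))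
        (a * c) (b * c) :=
      Relation.ReflTransGen.head_induction_on hpath Relation.ReflTransGen.refl
        (fun h' _ ih => (hkey _ _ h').trans ih)
    refine Relation.ReflTransGen.head
      ⟨ha, le_of_eq hac.symm, Or.inr (by rw [← mul_assoc, idem])⟩ ?_
    exact hmid.trans (Relation.ReflTransGen.single
      ⟨le_of_eq hbc.symm, hb, Or.inl (by rw [← mul_assoc, idem])⟩)
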